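/- Let 𝔫 be the 5-dimensional real Lie algebra with orthonormal basis {E₁,…,E₅} and non-zero brackets [E₁,E₂] = m·E₄ and [E₁,E₃] = m·E₅ with m > 0. Then the diagonal endomorphism D defined by D(E₁) = m²·E₁, D(E₂) = (3/2)m²·E₂, D(E₃) = (3/2)m²·E₃, D(E₄) = (5/2)m²·E₄, D(E₅) = (5/2)m²·E₅ is a derivation of 𝔫, and Ric = −2m²·Id + D. -/
import Mathlib


open scoped BigOperators

namespace Nilsoliton3

noncomputable section

abbrev V : Type := Fin 5 → ℝ

/-- The orthonormal basis vectors E₁,…,E₅ (indexed 0,…,4). -/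
def E (i : Fin 5) : V := Pi.single i 1

/-- The inner product making `E` an orthonormal basis. -/
def ip (x y : V) : ℝ := ∑ i, x i * y i

/-- `D` is a derivation of the bracket `br`. -/
def IsDerivation (br : V → V → V) (D : V →ₗ[ℝ] V) : Prop :=
  ∀ X Y : V, D (br X Y) = br (D X) Y + br X (D Y)

/-- `Ric` is the Ricci operator of the nilpotent Lie group with left-invariant
metric determined by the bracket `br` and the orthonormal basis `E`. -/
def IsRicci (br : V → V → V) (Ric : V →ₗ[ℝ] V) : Prop :=
  ∀ X Y : V, ip (Ric X) Y =
      -(1/2) * (∑ i : Fin 5, ip (br X (E i)) (br Y (E i)))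
      + (1/4) * (∑ i : Fin 5, ∑ j : Fin 5, ip (br (E i) (E j)) X * ip (br (E i) (E j)) Y)

/-- The bracket: [E₁,E₂] = m·E₄, [E₁,E₃] = m·E₅. -/
def br (m : ℝ) (X Y : V) : V :=
  (m * (X 0 * Y 1 - X 1 * Y 0)) • E 3 + (m * (X 0 * Y 2 - X 2 * Y 0)) • E 4

lemma ip_br_br (m : ℝ) (X Y Z W : V) :
    ip (br m X Y) (br m Z W) =
      m^2 * ((X 0 * Y 1 - X 1 * Y 0) * (Z 0 * W 1 - Z 1 * W 0)
        + (X 0 * Y 2 - X 2 * Y 0) * (Z 0 * W 2 - Z 2 * W 0)) := by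
  simp [ip, br, E, Fin.sum_univ_five, Pi.single_apply]
  ring

lemma ip_br (m : ℝ) (X Y Z : V) :
    ip (br m X Y) Z = m * (X 0 * Y 1 - X 1 * Y 0) * Z 3 + m * (X 0 * Y 2 - X 2 * Y 0) * Z 4 := by
  simp [ip, br, E, Fin.sum_univ_five, Pi.single_apply]
  try ring

lemma ip_single (x : V) (j : Fin 5) : ip x (E j) = x j := by
  simp [ip, E, Pi.single_apply]

lemma basis_decomp (X : V) : X = ∑ i, X i • E i := by
  funext j
  rw [Finset.sum_apply]
  simp [E, Pi.single_apply]

lemma Dcoord (D : V →ₗ[ℝ] V) {m : ℝ}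
    (hD0 : D (E 0) = (m ^ 2) • E 0)
    (hD1 : D (E 1) = ((3/2) * m ^ 2) • E 1)
    (hD2 : D (E 2) = ((3/2) * m ^ 2) • E 2)
    (hD3 : D (E 3) = ((5/2) * m ^ 2) • E 3)
    (hD4 : D (E 4) = ((5/2) * m ^ 2) • E 4) (X : V) :
    D X = fun j => (![m^2, (3/2)*m^2, (3/2)*m^2, (5/2)*m^2, (5/2)*m^2] : Fin 5 → ℝ) j * X j := by
  conv_lhs => rw [basis_decomp X]
  rw [map_sum]
  funext j
  rw [Fin.sum_univ_five]
  simp only [map_smul, hD0, hD1, hD2, hD3, hD4]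
  fin_cases j <;> simp [E, Pi.single_apply] <;> ring

set_option maxHeartbeats 1600000 in
theorem stmt3 (m : ℝ) (hm : 0 < m)
    (Ric : V →ₗ[ℝ] V) (hRic : IsRicci (br m) Ric)
    (D : V →ₗ[ℝ] V)
    (hD0 : D (E 0) = (m ^ 2) • E 0)
    (hD1 : D (E 1) = ((3/2) * m ^ 2) • E 1)
    (hD2 : D (E 2) = ((3/2) * m ^ 2) • E 2)
    (hD3 : D (E 3) = ((5/2) * m ^ 2) • E 3)
    (hD4 : D (E 4) = ((5/2) * m ^ 2) • E 4) :
    IsDerivation (br m) D ∧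
    Ric = (-2 * m ^ 2) • (LinearMap.id : V →ₗ[ℝ] V) + D := by
  have hDX := Dcoord D hD0 hD1 hD2 hD3 hD4
  constructor
  · intro X Y
    funext k
    simp only [hDX, br, E, Pi.add_apply, Pi.smul_apply, Pi.single_apply, smul_eq_mul]
    fin_cases k <;> simp <;> ring
  · apply (Pi.basisFun ℝ (Fin 5)).ext
    intro i
    have hb : (Pi.basisFun ℝ (Fin 5)) i = E i := by
      simp [E, Pi.basisFun_apply]
    rw [hb]
    funext j
    have h1 : Ric (E i) j = ip (Ric (E i)) (E j) := (ip_single _ j).symm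
    rw [show (((-2 * m ^ 2) • (LinearMap.id : V →ₗ[ℝ] V) + D) (E i)) j
        = (-2 * m ^ 2) * (E i j) + D (E i) j by simp, h1, hRic (E i) (E j)]
    simp only [ip_br_br, ip_br, Fin.sum_univ_five]
    have hD0' : D ((Pi.single (0 : Fin 5) (1:ℝ) : V)) = (m ^ 2) • (Pi.single (0 : Fin 5) (1:ℝ) : V) := hD0
    have hD1' : D ((Pi.single (1 : Fin 5) (1:ℝ) : V)) = ((3/2) * m ^ 2) • (Pi.single (1 : Fin 5) (1:ℝ) : V) := hD1
    have hD2' : D ((Pi.single (2 : Fin 5) (1:ℝ) : V)) = ((3/2) * m ^ 2) • (Pi.single (2 : Fin 5) (1:ℝ) : V) := hD2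
    have hD3' : D ((Pi.single (3 : Fin 5) (1:ℝ) : V)) = ((5/2) * m ^ 2) • (Pi.single (3 : Fin 5) (1:ℝ) : V) := hD3
    have hD4' : D ((Pi.single (4 : Fin 5) (1:ℝ) : V)) = ((5/2) * m ^ 2) • (Pi.single (4 : Fin 5) (1:ℝ) : V) := hD4
    fin_cases i <;> fin_cases j <;>
      simp [E, br, hD0', hD1', hD2', hD3', hD4', Pi.single_apply] <;>
      norm_num <;> try ring

end

end Nilsoliton3
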